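/- Let (A, Con, ⊢, Δ) be an information system with witnesses satisfying condition (BC): for all finite X ⊆ A and i, j ∈ A with (i,X),(j,X) ∈ Con, (i,X) ⊢ a iff (j,X) ⊢ a for every a. Then the L-domain of states |A| is bounded-complete: every pair of states bounded above has a least upper bound. -/

import Mathlib

variable {A : Type*}

/-- An information system with witnesses `(A, Con, ⊢, Δ)`. -/
structure IsISW (Δ : A) (Con : A → Finset A → Prop)
    (ent : A → Finset A → A → Prop) : Prop where
  dom : ∀ i X a, ent i X a → Con i X
  ax1 : ∀ i, Con i {i}
  ax2 : ∀ i (X Y : Finset A), Y ⊆ X → Con i X → Con i Y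
  ax3 : ∀ i, ent i ∅ Δ
  ax4 : ∀ i (X Y : Finset A), Con i X → (∀ b ∈ Y, ent i X b) → Con i Y
  ax5 : ∀ i (X Y : Finset A) (a : A), Con i X → Con i Y → X ⊆ Y → ent i X a → ent i Y a
  ax6 : ∀ i (X Y : Finset A) (a : A), Con i X → (∀ b ∈ Y, ent i X b) → ent i Y a → ent i X a
  ax7 : ∀ i j : A, Con j {i} → ∀ X, Con i X → Con j X
  ax8 : ∀ (i j : A) (X : Finset A) (a : A), Con j {i} → Con i X → ent i X a → ent j X a
  ax9 : ∀ (i j : A) (X : Finset A) (a : A), Con j {i} → Con i X → ent j X a → ent i X a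
  ax10 : ∀ i (X Y : Finset A), Con i X → (∀ b ∈ Y, ent i X b) →
      ∃ e Z, Con e Z ∧ ent i X e ∧ (∀ b ∈ Z, ent i X b) ∧ (∀ b ∈ Y, ent e Z b)

/-- A state of an information system with witnesses: finitely consistent with a
witness in the state (ST1), entailment-closed (ST2), every element derivable (ST3). -/
def IsState (Con : A → Finset A → Prop) (ent : A → Finset A → A → Prop)
    (x : Set A) : Prop :=
  (∀ F : Finset A, ↑F ⊆ x → ∃ i ∈ x, Con i F) ∧
  (∀ i ∈ x, ∀ X : Finset A, ↑X ⊆ x → Con i X → ∀ a, ent i X a → a ∈ x) ∧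
  (∀ a ∈ x, ∃ i ∈ x, ∃ X : Finset A, ↑X ⊆ x ∧ Con i X ∧ ent i X a)

theorem stmt13 {Δ : A} {Con : A → Finset A → Prop} {ent : A → Finset A → A → Prop}
    (h : IsISW Δ Con ent)
    (hBC : ∀ (i j : A) (X : Finset A), Con i X → Con j X →
      ∀ a, ent i X a ↔ ent j X a) :
    ∀ x y : Set A, IsState Con ent x → IsState Con ent y →
      (∃ z : Set A, IsState Con ent z ∧ x ⊆ z ∧ y ⊆ z) →
      ∃ s : Set A, IsState Con ent s ∧ x ⊆ s ∧ y ⊆ s ∧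
        ∀ w : Set A, IsState Con ent w → x ⊆ w → y ⊆ w → s ⊆ w := by
  classical
  rintro x y hx hy ⟨z, hz, hxz, hyz⟩
  obtain ⟨hz1, hz2, hz3⟩ := hz
  set s : Set A := {a | ∃ i ∈ z, ∃ Z : Finset A, ↑Z ⊆ x ∪ y ∧ Con i Z ∧ ent i Z a}
    with hs
  have hxys : x ∪ y ⊆ z := Set.union_subset hxz hyz
  -- transfer a derivation to any consistent witness over a larger set
  have transfer : ∀ (k : A) (Z : Finset A), Con k Z →
      ∀ (a i : A) (Za : Finset A), Za ⊆ Z → Con i Za → ent i Za a → ent k Z a := by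
    intro k Z hkZ a i Za hsub hiZa hent
    have hkZa : Con k Za := h.ax2 k Z Za hsub hkZ
    exact h.ax5 k Za Z a hkZa hkZ hsub ((hBC i k Za hiZa hkZa a).mp hent)
  -- combine finitely many members of s into a common base
  have combine : ∀ F : Finset A, (∀ a ∈ F, a ∈ s) →
      ∃ Z : Finset A, ↑Z ⊆ x ∪ y ∧
        ∀ a ∈ F, ∃ i ∈ z, ∃ Za : Finset A, Za ⊆ Z ∧ Con i Za ∧ ent i Za a := by
    intro F
    induction F using Finset.induction_on with
    | empty => intro _; exact ⟨∅, by simp, by simp⟩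
    | insert _ _ ha ih =>
      rename_i a F
      intro hmem
      obtain ⟨Z, hZ, hZP⟩ := ih (fun b hb => hmem b (Finset.mem_insert_of_mem hb))
      obtain ⟨i, hiz, Za, hZa, hCon, hent⟩ := hmem a (Finset.mem_insert_self a F)
      refine ⟨Z ∪ Za, ?_, ?_⟩
      · push_cast; exact Set.union_subset hZ hZa
      · intro b hb
        rcases Finset.mem_insert.mp hb with rfl | hb
        · exact ⟨i, hiz, Za, Finset.subset_union_right, hCon, hent⟩
        · obtain ⟨j, hj, Zb, h1, h2, h3⟩ := hZP b hb
          exact ⟨j, hj, Zb, h1.trans Finset.subset_union_left, h2, h3⟩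
  have master : ∀ F : Finset A, (∀ a ∈ F, a ∈ s) →
      ∃ k ∈ z, ∃ Z : Finset A, ↑Z ⊆ x ∪ y ∧ Con k Z ∧ ∀ a ∈ F, ent k Z a := by
    intro F hF
    obtain ⟨Z, hZ, hZP⟩ := combine F hF
    obtain ⟨k, hk, hkZ⟩ := hz1 Z (hZ.trans hxys)
    refine ⟨k, hk, Z, hZ, hkZ, fun a ha => ?_⟩
    obtain ⟨i, _, Za, h1, h2, h3⟩ := hZP a ha
    exact transfer k Z hkZ a i Za h1 h2 h3
  have hxs : x ⊆ s := by
    intro a ha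
    obtain ⟨i, hi, X, hXx, hCon, hent⟩ := hx.2.2 a ha
    exact ⟨i, hxz hi, X, hXx.trans Set.subset_union_left, hCon, hent⟩
  have hys : y ⊆ s := by
    intro a ha
    obtain ⟨i, hi, X, hXx, hCon, hent⟩ := hy.2.2 a ha
    exact ⟨i, hyz hi, X, hXx.trans Set.subset_union_right, hCon, hent⟩
  refine ⟨s, ⟨?_, ?_, ?_⟩, hxs, hys, ?_⟩
  · -- ST1
    intro F hF
    obtain ⟨k, hk, Z, hZ, hkZ, hent⟩ := master F hF
    obtain ⟨e, W, hConeW, hentke, hentW, hentF⟩ := h.ax10 k Z F hkZ hent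
    exact ⟨e, ⟨k, hk, Z, hZ, hkZ, hentke⟩, h.ax4 e W F hConeW hentF⟩
  · -- ST2
    intro i hi X hX hCon a hent
    have hall : ∀ b ∈ insert i X, b ∈ s := by
      intro b hb
      rcases Finset.mem_insert.mp hb with rfl | hb
      · exact hi
      · exact hX hb
    obtain ⟨k, hk, Z, hZ, hkZ, hentZ⟩ := master (insert i X) hall
    have hentX : ∀ b ∈ X, ent k Z b := fun b hb => hentZ b (Finset.mem_insert_of_mem hb)
    have hkX : Con k X := h.ax4 k Z X hkZ hentX
    have hkXa : ent k X a := (hBC i k X hCon hkX a).mp hent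
    exact ⟨k, hk, Z, hZ, hkZ, h.ax6 k Z X a hkZ hentX hkXa⟩
  · -- ST3
    rintro a ⟨i, hi, Z, hZ, hCon, hent⟩
    obtain ⟨e, W, hConeW, hentie, hentW, hentA⟩ :=
      h.ax10 i Z {a} hCon (by simpa using hent)
    refine ⟨e, ⟨i, hi, Z, hZ, hCon, hentie⟩, W, ?_, hConeW, by simpa using hentA⟩
    intro b hb
    exact ⟨i, hi, Z, hZ, hCon, hentW b (by simpa using hb)⟩
  · -- minimality
    rintro w hw hxw hyw a ⟨i, _, Z, hZ, hCon, hent⟩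
    have hZw : ↑Z ⊆ w := hZ.trans (Set.union_subset hxw hyw)
    obtain ⟨j, hj, hConj⟩ := hw.1 Z hZw
    exact hw.2.1 j hj Z hZw hConj a ((hBC i j Z hCon hConj a).mp hent)
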